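/- If λ is an infinite cardinal and U is an ultrafilter over κ which is (λ,λ;α_n)-nonregular for each n < ω, then U is (λ,ℵ₀; Σ_{n<ω} α_n)-nonregular. -/

import Mathlib

universe u

namespace UMeas

variable {A : Type u}

/-- The first `n` values of an infinite sequence, as a list. -/
def seg (s : ℕ → A) (n : ℕ) : List A := List.ofFn (fun i : Fin n => s i)

/-- `T` is a `U`-branching tree: a set of finite sequences closed under initial
segments, containing the empty sequence, whose branching sets are in `U`. -/
def IsUTree (U : Ultrafilter A) (T : Set (List A)) : Prop :=
  ([] ∈ T) ∧ (∀ σ ∈ T, ∀ τ : List A, τ <+: σ → τ ∈ T) ∧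
    ∀ σ ∈ T, {a : A | σ ++ [a] ∈ T} ∈ U

/-- The set of infinite branches through `T`. -/
def branches (T : Set (List A)) : Set (ℕ → A) := {s | ∀ n, seg s n ∈ T}

/-- Concatenation `σ⌢s` of a finite sequence with an infinite sequence. -/
def app (σ : List A) (s : ℕ → A) : ℕ → A :=
  fun n => if h : n < σ.length then σ.get ⟨n, h⟩ else s (n - σ.length)

/-- The section `X↾σ = {s | σ⌢s ∈ X}`. -/
def sect (X : Set (ℕ → A)) (σ : List A) : Set (ℕ → A) := {s | app σ s ∈ X}

def ULarge (U : Ultrafilter A) (X : Set (ℕ → A)) : Prop :=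
  ∃ T, IsUTree U T ∧ branches T ⊆ X

def USmall (U : Ultrafilter A) (X : Set (ℕ → A)) : Prop :=
  ∃ T, IsUTree U T ∧ branches T ∩ X = ∅

def UDetermined (U : Ultrafilter A) (X : Set (ℕ → A)) : Prop :=
  ULarge U X ∨ USmall U X

def UNull (U : Ultrafilter A) (X : Set (ℕ → A)) : Prop :=
  ∀ σ : List A, USmall U (sect X σ)

def UMeasurable (U : Ultrafilter A) (X : Set (ℕ → A)) : Prop :=
  ∀ σ : List A, UDetermined U (sect X σ)

end UMeas

namespace UMeas

/-- Sequences of ordinal length `β` with values in `A`. -/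
def OSeq (A : Type u) (β : Ordinal.{u}) := ∀ γ : Ordinal.{u}, γ < β → A

/-- Restriction `s↾γ` of an ordinal-length sequence. -/
def ores {A : Type u} {β : Ordinal.{u}} (s : OSeq A β) (γ : Ordinal.{u}) (h : γ ≤ β) :
    OSeq A γ := fun δ hδ => s δ (hδ.trans_le h)

/-- Extension `s⌢⟨a⟩` of an ordinal-length sequence by one element. -/
noncomputable def oext {A : Type u} {β : Ordinal.{u}} (s : OSeq A β) (a : A) : OSeq A (β + 1) :=
  fun δ hδ => if h : δ < β then s δ h else a

/-- A closed `U`-branching tree of height `α`: for each `β`, `mem β` is the set of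
sequences of length `β` in the tree (only levels `β < α` are relevant). -/
structure ClosedUBT (A : Type u) (U : Ultrafilter A) (α : Ordinal.{u}) where
  mem : ∀ β : Ordinal.{u}, Set (OSeq A β)
  isTree : ∀ β γ : Ordinal.{u}, β < α → (h : γ ≤ β) → ∀ s ∈ mem β, ores s γ h ∈ mem γ
  succ : ∀ β : Ordinal.{u}, β + 1 < α → ∀ s ∈ mem β, {a : A | oext s a ∈ mem (β + 1)} ∈ U
  nonsucc : ∀ β : Ordinal.{u}, β < α → (¬ ∃ γ : Ordinal.{u}, β = γ + 1) →
    ∀ s : OSeq A β, s ∈ mem β ↔ ∀ γ : Ordinal.{u}, (h : γ < β) → ores s γ h.le ∈ mem γ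

/-- `U` is `(l, m; α)`-regular: there is a family of `l` closed `U`-branching trees of
height `α + 1` such that no subfamily of size `m` has a common maximal element. -/
def LMARegular {A : Type u} (U : Ultrafilter A) (l m : Cardinal.{u}) (α : Ordinal.{u}) : Prop :=
  ∃ T : (Cardinal.ord l).ToType → ClosedUBT A U (α + 1),
    ∀ S : Set (Cardinal.ord l).ToType, Cardinal.mk ↥S = m →
      ¬ ∃ s : OSeq A α, ∀ β ∈ S, s ∈ (T β).mem α

end UMeas

/-- Partial sums of a sequence of ordinals: `psum α n = α 0 + α 1 + ⋯ + α (n-1)`. -/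
def psum (α : ℕ → Ordinal.{u}) : ℕ → Ordinal.{u}
  | 0 => 0
  | n + 1 => psum α n + α n

namespace Stmt16Aux
open UMeas Cardinal Set

variable {A : Type u} {U : Ultrafilter A}

def ocast {β γ : Ordinal.{u}} (e : β = γ) (s : OSeq A β) : OSeq A γ := fun δ h => s δ (e ▸ h)

lemma mem_ocast_iff {α' : Ordinal.{u}} (T : ClosedUBT A U α') {β γ : Ordinal.{u}} (e : β = γ)
    (s : OSeq A β) : ocast e s ∈ T.mem γ ↔ s ∈ T.mem β := by
  subst e; exact Iff.rfl

lemma ocast_ores {β₀ β₁ β₂ : Ordinal.{u}} (e : β₁ = β₂) (u : OSeq A β₀) (h₁ : β₁ ≤ β₀)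
    (h₂ : β₂ ≤ β₀) : ocast e (ores u β₁ h₁) = ores u β₂ h₂ := by
  subst e; rfl

noncomputable def oconcat {p β : Ordinal.{u}} (s : OSeq A p) (t : OSeq A β) : OSeq A (p + β) :=
  fun γ h => if h' : γ < p then s γ h' else t (γ - p) ((Ordinal.sub_lt_of_le (not_lt.1 h')).2 h)

lemma ores_oconcat {p β : Ordinal.{u}} (s : OSeq A p) (t : OSeq A β) (h : p ≤ p + β) :
    ores (oconcat s t) p h = s := by
  funext γ hγ
  simp only [ores, oconcat, dif_pos hγ]

lemma oconcat_ores {p β : Ordinal.{u}} (s : OSeq A p) (t : OSeq A β) (γ : Ordinal.{u})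
    (hγ : γ ≤ β) (h : p + γ ≤ p + β) :
    oconcat s (ores t γ hγ) = ores (oconcat s t) (p + γ) h := rfl

lemma ores_oconcat_le {p β : Ordinal.{u}} (s : OSeq A p) (t : OSeq A β) (η : Ordinal.{u})
    (hη : η ≤ p) (h : η ≤ p + β) : ores (oconcat s t) η h = ores s η hη := by
  funext δ hδ
  simp only [ores, oconcat, dif_pos (lt_of_lt_of_le hδ hη)]

lemma oconcat_oext {p β : Ordinal.{u}} (s : OSeq A p) (t : OSeq A β) (a : A) :
    oconcat s (oext t a) = ocast (add_assoc p β 1) (oext (oconcat s t) a) := by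
  funext δ hδ
  simp only [oconcat, ocast, oext]
  rcases lt_or_ge δ p with h1 | h1
  · rw [dif_pos h1, dif_pos (h1.trans_le ((le_self_add : p ≤ p + β))), dif_pos h1]
  · rw [dif_neg (not_lt.2 h1)]
    by_cases h2 : δ - p < β
    · rw [dif_pos h2, dif_pos ((Ordinal.sub_lt_of_le h1).1 h2), dif_neg (not_lt.2 h1)]
    · rw [dif_neg h2, dif_neg (fun hh => h2 ((Ordinal.sub_lt_of_le h1).2 hh))]

lemma not_succ_add {p β : Ordinal.{u}} (h0 : β ≠ 0) (hs : ¬∃ γ : Ordinal.{u}, β = γ + 1) :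
    ¬∃ δ : Ordinal.{u}, p + β = δ + 1 := by
  have hβ : Order.IsSuccLimit β := by
    rcases Ordinal.zero_or_succ_or_isSuccLimit β with h | ⟨a, h⟩ | h
    · exact absurd h h0
    · exact absurd ⟨a, by rw [Ordinal.add_one_eq_succ]; exact h.symm⟩ hs
    · exact h
  have hl := Ordinal.isSuccLimit_add p hβ
  rintro ⟨δ, hδ⟩
  rw [Ordinal.add_one_eq_succ] at hδ
  exact Order.not_isSuccLimit_succ δ (hδ ▸ hl)

end Stmt16Aux
namespace Stmt16Aux
open UMeas Cardinal Set

variable {A : Type u} {U : Ultrafilter A}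

noncomputable def restr {α' : Ordinal.{u}} (T : ClosedUBT A U α') {p a : Ordinal.{u}}
    (ha : p + a < α') (s : OSeq A p) (hs : s ∈ T.mem p) : ClosedUBT A U (a + 1) where
  mem β := {t | oconcat s t ∈ T.mem (p + β)}
  isTree β γ hβ hγ t ht := by
    have hβa : β ≤ a := by
      rw [Ordinal.add_one_eq_succ] at hβ; exact Order.lt_succ_iff.1 hβ
    have h1 : p + β < α' := (add_le_add_right hβa p).trans_lt ha
    have h2 : p + γ ≤ p + β := add_le_add_right hγ p
    show oconcat s (ores t γ hγ) ∈ T.mem (p + γ)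
    rw [oconcat_ores s t γ hγ h2]
    exact T.isTree _ _ h1 h2 _ ht
  succ β hβ t ht := by
    have hβa : β < a := by
      rw [Ordinal.add_one_eq_succ, Ordinal.add_one_eq_succ] at hβ
      exact Order.succ_lt_succ_iff.1 hβ
    have hβ1 : β + 1 ≤ a := by
      rw [Ordinal.add_one_eq_succ]; exact Order.succ_le_of_lt hβa
    have h1 : (p + β) + 1 < α' := by
      rw [add_assoc]
      exact (add_le_add_right hβ1 p).trans_lt ha
    have hU := T.succ (p + β) h1 (oconcat s t) ht
    suffices hh : {x : A | oconcat s (oext t x) ∈ T.mem (p + (β + 1))} ∈ U by exact hh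
    have hset : {x : A | oconcat s (oext t x) ∈ T.mem (p + (β + 1))}
        = {x : A | oext (oconcat s t) x ∈ T.mem ((p + β) + 1)} := by
      ext x
      show oconcat s (oext t x) ∈ T.mem (p + (β + 1)) ↔ _
      rw [oconcat_oext s t x, mem_ocast_iff]
      exact Iff.rfl
    rw [hset]
    exact hU
  nonsucc β hβ hns t := by
    have hβa : β ≤ a := by
      rw [Ordinal.add_one_eq_succ] at hβ; exact Order.lt_succ_iff.1 hβ
    have h1 : p + β < α' := (add_le_add_right hβa p).trans_lt ha
    have hp : p < α' := ((le_self_add : p ≤ p + a)).trans_lt ha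
    by_cases h0 : β = 0
    · subst h0
      constructor
      · intro _ γ hγ
        exact absurd hγ not_lt_zero
      · intro _
        show oconcat s t ∈ T.mem (p + 0)
        have he : oconcat s t = ocast (add_zero p).symm s := by
          funext δ hδ
          have hδp : δ < p := by have := hδ; rwa [add_zero] at this
          simp only [oconcat, ocast, dif_pos hδp]
        rw [he]
        exact (mem_ocast_iff T _ s).2 hs
    · have hns' := not_succ_add (p := p) h0 hns
      constructor
      · intro ht γ hγ
        show oconcat s (ores t γ hγ.le) ∈ T.mem (p + γ)
        rw [oconcat_ores s t γ hγ.le (add_le_add_right hγ.le p)]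
        exact T.isTree (p + β) (p + γ) h1 (add_le_add_right hγ.le p) _ ht
      · intro hh
        show oconcat s t ∈ T.mem (p + β)
        rw [T.nonsucc (p + β) h1 hns']
        intro η hη
        rcases le_or_gt η p with hle | hlt
        · rw [ores_oconcat_le s t η hle hη.le]
          exact T.isTree p η hp hle s hs
        · have hsub : η - p < β := (Ordinal.sub_lt_of_le hlt.le).2 hη
          have heq : p + (η - p) = η := Ordinal.add_sub_cancel_of_le hlt.le
          have hmem : ores (oconcat s t) (p + (η - p)) (add_le_add_right hsub.le p)
              ∈ T.mem (p + (η - p)) := hh (η - p) hsub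
          have h3 := (mem_ocast_iff T heq _).2 hmem
          rwa [ocast_ores heq _ (add_le_add_right hsub.le p) hη.le] at h3

def interTree {α' : Ordinal.{u}} (ts : List (ClosedUBT A U α')) : ClosedUBT A U α' where
  mem β := {s | ∀ t ∈ ts, s ∈ t.mem β}
  isTree β γ hβ hγ s hs := fun t ht => t.isTree β γ hβ hγ s (hs t ht)
  succ β hβ s hs := by
    show {a : A | ∀ t ∈ ts, oext s a ∈ t.mem (β + 1)} ∈ U
    have hset : {a : A | ∀ t ∈ ts, oext s a ∈ t.mem (β + 1)}
        = ⋂ t ∈ {t | t ∈ ts}, {a : A | oext s a ∈ t.mem (β + 1)} := by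
      ext x; simp
    rw [hset]
    exact (Filter.biInter_mem ts.finite_toSet).2 fun t ht => t.succ β hβ s (hs t ht)
  nonsucc β hβ hns s := by
    constructor
    · intro hs γ hγ t ht
      exact ((t.nonsucc β hβ hns s).1 (hs t ht)) γ hγ
    · intro hh t ht
      exact (t.nonsucc β hβ hns s).2 fun γ hγ => hh γ hγ t ht

end Stmt16Aux
namespace Stmt16Aux
open UMeas Cardinal Set

variable {A : Type u} {U : Ultrafilter A} {l : Cardinal.{u}} {α : ℕ → Ordinal.{u}}

lemma psum_mono (α : ℕ → Ordinal.{u}) : Monotone (psum α) :=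
  monotone_nat_of_le_succ fun n => (le_self_add : psum α n ≤ psum α n + α n)

def Inv (T : (Cardinal.ord l).ToType → ClosedUBT A U ((⨆ n : ℕ, psum α n) + 1)) (n : ℕ)
    (x : Set (Cardinal.ord l).ToType × OSeq A (psum α n) × (ℕ → (Cardinal.ord l).ToType)) :
    Prop :=
  Cardinal.mk ↥x.1 = l ∧ (∀ β ∈ x.1, x.2.1 ∈ (T β).mem (psum α n)) ∧
    (∀ k, k < n → x.2.1 ∈ (T (x.2.2 k)).mem (psum α n)) ∧ Set.InjOn x.2.2 (Set.Iio n)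

lemma step_ex (hl : Cardinal.aleph0 ≤ l) (h : ∀ n : ℕ, ¬ LMARegular U l l (α n))
    (T : (Cardinal.ord l).ToType → ClosedUBT A U ((⨆ n : ℕ, psum α n) + 1))
    (n : ℕ) (x : Set (Cardinal.ord l).ToType × OSeq A (psum α n) × (ℕ → (Cardinal.ord l).ToType))
    (hx : Inv T n x) :
    ∃ y : Set (Cardinal.ord l).ToType × OSeq A (psum α (n + 1)) ×
        (ℕ → (Cardinal.ord l).ToType),
      Inv T (n + 1) y ∧
        (∀ γ (hγ' : γ < psum α (n + 1)) (hγ : γ < psum α n), y.2.1 γ hγ' = x.2.1 γ hγ) ∧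
        (∀ k, k < n → y.2.2 k = x.2.2 k) := by
  obtain ⟨B, s, g⟩ := x
  obtain ⟨hBc, hBm, hgm, hginj⟩ := hx
  have hI : #((Cardinal.ord l).ToType) = l := Cardinal.mk_ord_toType l
  obtain ⟨e⟩ : Nonempty ((Cardinal.ord l).ToType ≃ ↥B) := Cardinal.eq.1 (hI.trans hBc.symm)
  have hps : ∀ m : ℕ, psum α m ≤ ⨆ m : ℕ, psum α m := fun m => le_ciSup (Ordinal.bddAbove_range _) m
  have hlt : psum α n + α n < (⨆ m : ℕ, psum α m) + 1 := by
    rw [Ordinal.add_one_eq_succ]; exact Order.lt_succ_iff.2 (hps (n + 1))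
  set Fam : (Cardinal.ord l).ToType → ClosedUBT A U (α n + 1) := fun γ =>
    interTree ((restr (T ((e γ : ↥B) : (Cardinal.ord l).ToType)) hlt s (hBm _ (e γ).2)) ::
      List.ofFn (fun k : Fin n => restr (T (g k)) hlt s (hgm k k.2))) with hFam
  have hn := h n
  unfold LMARegular at hn
  push_neg at hn
  obtain ⟨S, hS, t, ht⟩ := hn Fam
  have hSne : S.Nonempty := by
    rw [← Set.nonempty_coe_sort]
    exact Cardinal.mk_ne_zero_iff.1 (by rw [hS]; exact (aleph0_pos.trans_le hl).ne')
  obtain ⟨γ₀, hγ₀⟩ := hSne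
  have htmem : ∀ γ ∈ S,
      oconcat s t ∈ (T ((e γ : ↥B) : (Cardinal.ord l).ToType)).mem (psum α n + α n) :=
    fun γ hγ => (ht γ hγ) _ List.mem_cons_self
  have htg : ∀ k, (hk : k < n) → oconcat s t ∈ (T (g k)).mem (psum α n + α n) := by
    intro k hk
    have h1 : t ∈ (restr (T (g k)) hlt s (hgm k hk)).mem (α n) := by
      refine ht γ₀ hγ₀ _ ?_
      apply List.mem_cons_of_mem
      rw [List.mem_ofFn]
      exact ⟨⟨k, hk⟩, rfl⟩
    exact h1
  set B' : Set (Cardinal.ord l).ToType := (fun γ => ((e γ : ↥B) : (Cardinal.ord l).ToType)) '' S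
    with hB'
  have hinj : Function.Injective
      (fun γ : (Cardinal.ord l).ToType => ((e γ : ↥B) : (Cardinal.ord l).ToType)) :=
    fun a b hab => e.injective (Subtype.val_injective hab)
  have hB'c : #↥B' = l := by
    rw [hB', Cardinal.mk_image_eq hinj]; exact hS
  have hB'inf : B'.Infinite := by
    rw [← Set.infinite_coe_iff]
    exact Cardinal.infinite_iff.2 (by rw [hB'c]; exact hl)
  obtain ⟨βn, hβn1, hβn2⟩ := (hB'inf.diff ((Set.finite_Iio n).image g)).nonempty
  refine ⟨⟨B', oconcat s t, fun k => if k = n then βn else g k⟩, ⟨hB'c, ?_, ?_, ?_⟩, ?_, ?_⟩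
  · rintro β ⟨γ, hγ, rfl⟩
    exact htmem γ hγ
  · intro k hk
    show oconcat s t ∈ (T (if k = n then βn else g k)).mem (psum α (n + 1))
    by_cases hkn : k = n
    · subst hkn
      rw [if_pos rfl]
      obtain ⟨γ, hγ, rfl⟩ := hβn1
      exact htmem γ hγ
    · rw [if_neg hkn]
      exact htg k (lt_of_le_of_ne (Nat.lt_succ_iff.1 hk) hkn)
  · intro i hi j hj hij
    simp only [Set.mem_Iio] at hi hj
    have hij' : (if i = n then βn else g i) = (if j = n then βn else g j) := hij
    clear hij
    rename' hij' => hij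
    by_cases hin : i = n <;> by_cases hjn : j = n
    · rw [hin, hjn]
    · exfalso
      rw [if_pos hin, if_neg hjn] at hij
      exact hβn2 ⟨j, Set.mem_Iio.2 (lt_of_le_of_ne (Nat.lt_succ_iff.1 hj) hjn), hij.symm⟩
    · exfalso
      rw [if_neg hin, if_pos hjn] at hij
      exact hβn2 ⟨i, Set.mem_Iio.2 (lt_of_le_of_ne (Nat.lt_succ_iff.1 hi) hin), hij⟩
    · rw [if_neg hin, if_neg hjn] at hij
      exact hginj (Set.mem_Iio.2 (lt_of_le_of_ne (Nat.lt_succ_iff.1 hi) hin))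
        (Set.mem_Iio.2 (lt_of_le_of_ne (Nat.lt_succ_iff.1 hj) hjn)) hij
  · intro γ hγ' hγ
    show oconcat s t γ hγ' = s γ hγ
    simp only [oconcat, dif_pos hγ]
  · intro k hk
    show (if k = n then βn else g k) = g k
    exact if_neg (Nat.ne_of_lt hk)

noncomputable def chain (hl : Cardinal.aleph0 ≤ l) (h : ∀ n : ℕ, ¬ LMARegular U l l (α n))
    (T : (Cardinal.ord l).ToType → ClosedUBT A U ((⨆ n : ℕ, psum α n) + 1))
    (x0 : Set (Cardinal.ord l).ToType × OSeq A (psum α 0) × (ℕ → (Cardinal.ord l).ToType))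
    (hx0 : Inv T 0 x0) :
    ∀ n : ℕ, {x : Set (Cardinal.ord l).ToType × OSeq A (psum α n) ×
      (ℕ → (Cardinal.ord l).ToType) // Inv T n x}
  | 0 => ⟨x0, hx0⟩
  | n + 1 => ⟨(step_ex hl h T n (chain hl h T x0 hx0 n).1 (chain hl h T x0 hx0 n).2).choose,
      (step_ex hl h T n (chain hl h T x0 hx0 n).1 (chain hl h T x0 hx0 n).2).choose_spec.1⟩

lemma chain_spec (hl : Cardinal.aleph0 ≤ l) (h : ∀ n : ℕ, ¬ LMARegular U l l (α n))
    (T : (Cardinal.ord l).ToType → ClosedUBT A U ((⨆ n : ℕ, psum α n) + 1))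
    (x0 : Set (Cardinal.ord l).ToType × OSeq A (psum α 0) × (ℕ → (Cardinal.ord l).ToType))
    (hx0 : Inv T 0 x0) (n : ℕ) :
    (∀ γ (hγ' : γ < psum α (n + 1)) (hγ : γ < psum α n),
        (chain hl h T x0 hx0 (n + 1)).1.2.1 γ hγ' = (chain hl h T x0 hx0 n).1.2.1 γ hγ) ∧
      (∀ k, k < n → (chain hl h T x0 hx0 (n + 1)).1.2.2 k = (chain hl h T x0 hx0 n).1.2.2 k) := by
  have hs := (step_ex hl h T n (chain hl h T x0 hx0 n).1 (chain hl h T x0 hx0 n).2).choose_spec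
  exact ⟨hs.2.1, hs.2.2⟩

end Stmt16Aux
namespace Stmt16Aux
open UMeas Cardinal Set

variable {A : Type u} {U : Ultrafilter A} {l : Cardinal.{u}} {α : ℕ → Ordinal.{u}}

end Stmt16Aux

open Stmt16Aux UMeas Cardinal Set in
theorem stmt16 {A : Type u} (U : Ultrafilter A) (l : Cardinal.{u})
    (hl : Cardinal.aleph0 ≤ l) (α : ℕ → Ordinal.{u})
    (h : ∀ n : ℕ, ¬ UMeas.LMARegular U l l (α n)) :
    ¬ UMeas.LMARegular U l Cardinal.aleph0 (⨆ n : ℕ, psum α n) := by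
  intro hreg
  obtain ⟨T, hT⟩ := hreg
  classical
  have hI : #((Cardinal.ord l).ToType) = l := Cardinal.mk_ord_toType l
  have hne : Nonempty ((Cardinal.ord l).ToType) :=
    Cardinal.mk_ne_zero_iff.1 (by rw [hI]; exact (aleph0_pos.trans_le hl).ne')
  obtain ⟨i0⟩ := hne
  have hσ : ∀ m : ℕ, psum α m ≤ ⨆ m : ℕ, psum α m :=
    fun m => le_ciSup (Ordinal.bddAbove_range _) m
  have hσ1 : (⨆ m : ℕ, psum α m) < (⨆ m : ℕ, psum α m) + 1 := by
    rw [Ordinal.add_one_eq_succ]; exact Order.lt_succ _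
  have hx0 : Inv T 0 ⟨Set.univ, fun γ hγ => absurd hγ not_lt_zero, fun _ => i0⟩ := by
    refine ⟨by rw [Cardinal.mk_univ]; exact hI, ?_, ?_, ?_⟩
    · intro β _
      refine ((T β).nonsucc 0 (lt_of_le_of_lt zero_le hσ1) ?_ _).2 ?_
      · rintro ⟨γ, hγ⟩
        exact (Ordinal.succ_ne_zero γ) (by rw [← Ordinal.add_one_eq_succ]; exact hγ.symm)
      · intro γ hγ
        exact absurd hγ not_lt_zero
    · intro k hk
      exact absurd hk (Nat.not_lt_zero k)
    · intro i hi
      exact absurd hi (by simp)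
  set C := chain hl h T _ hx0 with hC
  have gcoh : ∀ n k, k < n → (C (n + 1)).1.2.2 k = (C n).1.2.2 k :=
    fun n => (chain_spec hl h T _ hx0 n).2
  have scoh : ∀ n γ (hγ' : γ < psum α (n + 1)) (hγ : γ < psum α n),
      (C (n + 1)).1.2.1 γ hγ' = (C n).1.2.1 γ hγ :=
    fun n => (chain_spec hl h T _ hx0 n).1
  have gstab : ∀ k n, k < n → (C n).1.2.2 k = (C (k + 1)).1.2.2 k := by
    intro k n
    induction n with
    | zero => intro h0; exact absurd h0 (Nat.not_lt_zero k)
    | succ n ih =>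
      intro hk
      rcases Nat.lt_succ_iff_lt_or_eq.1 hk with h' | h'
      · rw [gcoh n k h']; exact ih h'
      · subst h'; rfl
  have sstab : ∀ m n, m ≤ n → ∀ γ (hγ : γ < psum α m) (hγ' : γ < psum α n),
      (C n).1.2.1 γ hγ' = (C m).1.2.1 γ hγ := by
    intro m n
    induction n with
    | zero =>
      intro hmn γ hγ hγ'
      have : m = 0 := Nat.le_zero.1 hmn
      subst this; rfl
    | succ n ih =>
      intro hmn γ hγ hγ'
      rcases Nat.lt_succ_iff_lt_or_eq.1 (Nat.lt_succ_of_le hmn) with h' | h'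
      · have hm : m ≤ n := Nat.lt_succ_iff.1 h'
        rw [scoh n γ hγ' (lt_of_lt_of_le hγ (psum_mono α hm))]
        exact ih hm γ hγ _
      · subst h'; rfl
  set g : ℕ → (Cardinal.ord l).ToType := fun k => (C (k + 1)).1.2.2 k with hg
  have ginj : Function.Injective g := by
    intro j k hjk
    by_contra hne'
    rcases Ne.lt_or_gt hne' with h' | h'
    · have e1 : (C (k + 1)).1.2.2 j = (C (k + 1)).1.2.2 k := by
        rw [gstab j (k + 1) (by omega)]; exact hjk
      exact hne' ((C (k + 1)).2.2.2.2 (Set.mem_Iio.2 (by omega)) (Set.mem_Iio.2 (by omega)) e1)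
    · have e1 : (C (j + 1)).1.2.2 j = (C (j + 1)).1.2.2 k := by
        rw [gstab k (j + 1) (by omega)]; exact hjk
      exact hne' ((C (j + 1)).2.2.2.2 (Set.mem_Iio.2 (by omega)) (Set.mem_Iio.2 (by omega)) e1)
  have hex : ∀ γ, γ < (⨆ m : ℕ, psum α m) → ∃ n, γ < psum α n := by
    intro γ hγ
    rwa [lt_ciSup_iff (Ordinal.bddAbove_range _)] at hγ
  set s : OSeq A (⨆ m : ℕ, psum α m) :=
    fun γ hγ => (C (hex γ hγ).choose).1.2.1 γ (hex γ hγ).choose_spec with hs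
  have skey : ∀ n γ (hγ : γ < psum α n) (hγ'' : γ < ⨆ m : ℕ, psum α m),
      s γ hγ'' = (C n).1.2.1 γ hγ := by
    intro n γ hγ hγ''
    show (C (hex γ hγ'').choose).1.2.1 γ (hex γ hγ'').choose_spec = _
    rcases le_total (hex γ hγ'').choose n with hle | hle
    · exact (sstab _ n hle γ (hex γ hγ'').choose_spec hγ).symm
    · exact sstab n _ hle γ hγ (hex γ hγ'').choose_spec
  have smem : ∀ k, s ∈ (T (g k)).mem (⨆ m : ℕ, psum α m) := by
    intro k
    by_cases hatt : ∃ N, psum α N = ⨆ m : ℕ, psum α m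
    · obtain ⟨N, hN⟩ := hatt
      set M := max N (k + 1) with hM
      have hMe : psum α M = ⨆ m : ℕ, psum α m :=
        le_antisymm (hσ M) (by rw [← hN]; exact psum_mono α (le_max_left _ _))
      have hkM : k < M := lt_of_lt_of_le (Nat.lt_succ_self k) (le_max_right _ _)
      have hmem : (C M).1.2.1 ∈ (T ((C M).1.2.2 k)).mem (psum α M) := (C M).2.2.2.1 k hkM
      rw [gstab k M hkM] at hmem
      have hs_eq : s = ocast hMe (C M).1.2.1 := by
        funext γ hγ
        exact skey M γ (by rw [hMe]; exact hγ) hγ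
      rw [hs_eq]
      exact (mem_ocast_iff (T (g k)) hMe _).2 hmem
    · push_neg at hatt
      have hns : ¬∃ δ : Ordinal.{u}, (⨆ m : ℕ, psum α m) = δ + 1 := by
        rintro ⟨δ, hδ⟩
        have hδlt : δ < ⨆ m : ℕ, psum α m := by
          rw [hδ, Ordinal.add_one_eq_succ]; exact Order.lt_succ δ
        obtain ⟨n, hn⟩ := hex δ hδlt
        refine hatt n (le_antisymm (hσ n) ?_)
        rw [hδ, Ordinal.add_one_eq_succ]
        exact Order.succ_le_of_lt hn
      refine ((T (g k)).nonsucc _ hσ1 hns s).2 ?_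
      intro γ hγ
      obtain ⟨n0, hn0⟩ := hex γ hγ
      set n := max n0 (k + 1) with hn
      have hγn : γ < psum α n := lt_of_lt_of_le hn0 (psum_mono α (le_max_left _ _))
      have hkn : k < n := lt_of_lt_of_le (Nat.lt_succ_self k) (le_max_right _ _)
      have hmem : (C n).1.2.1 ∈ (T ((C n).1.2.2 k)).mem (psum α n) := (C n).2.2.2.1 k hkn
      rw [gstab k n hkn] at hmem
      have hres : ores s γ hγ.le = ores (C n).1.2.1 γ hγn.le := by
        funext δ hδ
        exact skey n δ (hδ.trans hγn) (hδ.trans_le hγ.le)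
      rw [hres]
      exact (T (g k)).isTree (psum α n) γ (lt_of_le_of_lt (hσ n) hσ1) hγn.le _ hmem
  have hrange : #↥(Set.range g) = Cardinal.aleph0 := by
    haveI : Infinite ↥(Set.range g) :=
      Set.infinite_coe_iff.2 (Set.infinite_range_of_injective ginj)
    haveI : Countable ↥(Set.range g) := (Set.countable_range g).to_subtype
    exact Cardinal.mk_eq_aleph0 _
  refine hT (Set.range g) hrange ⟨s, ?_⟩
  rintro β ⟨k, rfl⟩
  exact smem k
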